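/- Let P = [m] be the totally ordered set on m elements. An isotone map φ ∈ Hom([m],[n]) is upper normal if and only if φ(m) = n, and this holds if and only if T_*(φ) is a maximal chain in the product order [m]×[n] (i.e., a lattice path from (1,1) to (m,n)). -/
import Mathlib


variable {P : Type*} [PartialOrder P] [Fintype P]

/-- `φ₋(p) = max {φ q | q < p}`, the max of the empty set being the bottom element of `[n]`. -/
def phiMinus [DecidableRel ((· < ·) : P → P → Prop)] {n : ℕ} (hn : 0 < n)
    (φ : P → Fin n) (p : P) : Fin n :=
  (insert (⟨0, hn⟩ : Fin n) ((Finset.univ.filter fun q => q < p).image φ)).sup'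
    (Finset.insert_nonempty _ _) id

/-- `φ⁺(p) = min {φ q | p < q}`, the min of the empty set being the top element of `[n]`. -/
def phiPlus [DecidableRel ((· < ·) : P → P → Prop)] {n : ℕ} (hn : 0 < n)
    (φ : P → Fin n) (p : P) : Fin n :=
  (insert (⟨n - 1, by omega⟩ : Fin n) ((Finset.univ.filter fun q => p < q).image φ)).inf'
    (Finset.insert_nonempty _ _) id

/-- `T_*(φ) = {(p,i) | φ q ≤ i ≤ φ p for all q < p}`. -/
def Tstar {n : ℕ} (φ : P → Fin n) : Set (P × Fin n) :=
  {x | x.2 ≤ φ x.1 ∧ ∀ q : P, q < x.1 → φ q ≤ x.2}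

/-- For P = [m] totally ordered, an isotone map φ : [m] → [n] is upper normal iff φ(m) = n,
iff T_*(φ) is a maximal chain in the product order [m] × [n] (a lattice path from (1,1)
to (m,n)). -/
theorem stmt8 {m n : ℕ} (hm : 0 < m) (hn : 0 < n) (φ : Fin m → Fin n) (hφ : Monotone φ) :
    ((φ = phiPlus hn (phiMinus hn φ)) ↔ φ ⟨m - 1, by omega⟩ = (⟨n - 1, by omega⟩ : Fin n)) ∧
      ((φ = phiPlus hn (phiMinus hn φ)) ↔ IsMaxChain (· ≤ ·) (Tstar φ)) := by
  have hmm : m - 1 < m := by omega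
  have hnn : n - 1 < n := by omega
  set lastm : Fin m := ⟨m - 1, hmm⟩ with hlm
  set topn : Fin n := ⟨n - 1, hnn⟩ with htn
  have htop : ∀ i : Fin n, i ≤ topn := fun i => by
    rw [htn, Fin.le_def]; have := i.isLt; simp; omega
  have hlast : ∀ q : Fin m, q ≤ lastm := fun q => by
    rw [hlm, Fin.le_def]; have := q.isLt; simp; omega
  have A : (φ = phiPlus hn (phiMinus hn φ)) ↔ φ lastm = topn := by
    constructor
    · intro h
      have : phiPlus hn (phiMinus hn φ) lastm = topn := by
        apply le_antisymm
        · exact Finset.inf'_le id (Finset.mem_insert_self _ _)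
        · apply Finset.le_inf'
          intro b hb
          simp only [Finset.mem_insert, Finset.mem_image, Finset.mem_filter] at hb
          rcases hb with rfl | ⟨q, ⟨_, hq⟩, rfl⟩
          · exact le_refl _
          · exact absurd hq (not_lt.mpr (hlast q))
      rw [h]; exact this
    · intro h
      funext p
      apply le_antisymm
      · apply Finset.le_inf'
        intro b hb
        simp only [Finset.mem_insert, Finset.mem_image, Finset.mem_filter] at hb
        rcases hb with rfl | ⟨q, ⟨_, hpq⟩, rfl⟩
        · exact htop _
        · apply Finset.le_sup' id
          simp only [Finset.mem_insert, Finset.mem_image, Finset.mem_filter]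
          exact Or.inr ⟨p, ⟨Finset.mem_univ p, hpq⟩, rfl⟩
      · by_cases hp : p = lastm
        · subst hp; rw [h]
          exact Finset.inf'_le id (Finset.mem_insert_self _ _)
        · have hpv : p.val < m - 1 := by
            have h1 := hlast p
            rw [Fin.le_def] at h1
            have : p.val ≠ m - 1 := fun hc => hp (Fin.ext hc)
            omega
          set q : Fin m := ⟨p.val + 1, by omega⟩ with hq
          have h1 : phiPlus hn (phiMinus hn φ) p ≤ phiMinus hn φ q := by
            apply Finset.inf'_le id
            simp only [Finset.mem_insert, Finset.mem_image, Finset.mem_filter]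
            exact Or.inr ⟨q, ⟨Finset.mem_univ q, by rw [hq, Fin.lt_def]; simp⟩, rfl⟩
          refine h1.trans ?_
          apply Finset.sup'_le
          intro b hb
          simp only [Finset.mem_insert, Finset.mem_image, Finset.mem_filter] at hb
          rcases hb with rfl | ⟨q', ⟨_, hq'⟩, rfl⟩
          · simp [Fin.le_def]
          · apply hφ
            rw [Fin.le_def]
            rw [hq, Fin.lt_def] at hq'
            simp at hq'
            omega
  have hchain : IsChain (· ≤ ·) (Tstar φ) := by
    rintro ⟨p, i⟩ ⟨hi1, hi2⟩ ⟨p', i'⟩ ⟨hi1', hi2'⟩ hne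
    rcases lt_trichotomy p p' with h | h | h
    · exact Or.inl ⟨h.le, le_trans hi1 (hi2' p h)⟩
    · subst h
      rcases le_total i i' with h' | h'
      · exact Or.inl ⟨le_refl _, h'⟩
      · exact Or.inr ⟨le_refl _, h'⟩
    · exact Or.inr ⟨h.le, le_trans hi1' (hi2 p' h)⟩
  have B : φ lastm = topn ↔ IsMaxChain (· ≤ ·) (Tstar φ) := by
    constructor
    · intro h
      refine ⟨hchain, ?_⟩
      intro t hct hst
      apply Set.Subset.antisymm hst
      rintro ⟨p, i⟩ hpt
      by_contra hni
      simp only [Tstar, Set.mem_setOf_eq, not_and, not_forall, not_le] at hni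
      by_cases hip : i ≤ φ p
      · -- there is q < p with i < φ q
        obtain ⟨q, hqp, hqi⟩ := hni hip
        have ha : (q, φ q) ∈ Tstar φ := ⟨le_refl _, fun r hr => hφ hr.le⟩
        have hat : (q, φ q) ∈ t := hst ha
        have hne : (q, φ q) ≠ (p, i) := by
          intro hc
          rw [Prod.ext_iff] at hc
          exact absurd hc.1 hqp.ne
        rcases hct hat hpt hne with hle | hle
        · exact absurd hle.2 (not_le.mpr hqi)
        · exact absurd hle.1 (not_le.mpr hqp)
      · -- φ p < i
        push_neg at hip
        -- minimal p' with i ≤ φ p'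
        have hSne : (Finset.univ.filter fun r : Fin m => i ≤ φ r).Nonempty :=
          ⟨lastm, by simp [h, htop i]⟩
        set p' : Fin m := (Finset.univ.filter fun r : Fin m => i ≤ φ r).min' hSne with hp'
        have hip' : i ≤ φ p' := by
          have := Finset.min'_mem _ hSne
          simp only [Finset.mem_filter] at this
          exact this.2
        have hpp' : p < p' := by
          by_contra hc
          push_neg at hc
          exact absurd (le_trans hip' (hφ hc)) (not_le.mpr hip)
        have hp'pos : 0 < p'.val := by
          have := hpp'
          rw [Fin.lt_def] at this
          omega
        set pr : Fin m := ⟨p'.val - 1, by omega⟩ with hpr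
        have hpri : φ pr < i := by
          by_contra hc
          push_neg at hc
          have hmem : pr ∈ Finset.univ.filter fun r : Fin m => i ≤ φ r := by
            simp [hc]
          have := Finset.min'_le _ _ hmem
          rw [← hp'] at this
          rw [Fin.le_def] at this
          simp only [hpr] at this
          omega
        have hb : (p', φ pr) ∈ Tstar φ := by
          refine ⟨le_trans hpri.le hip', fun r hr => ?_⟩
          apply hφ
          have hr' : r.val < p'.val := hr
          show r.val ≤ p'.val - 1
          omega
        have hbt : (p', φ pr) ∈ t := hst hb
        have hne : (p', φ pr) ≠ (p, i) := by
          intro hc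
          rw [Prod.ext_iff] at hc
          exact absurd hc.1 hpp'.ne'
        rcases hct hbt hpt hne with hle | hle
        · exact absurd hle.1 (not_le.mpr hpp')
        · exact absurd hle.2 (not_le.mpr hpri)
    · intro hmax
      by_contra hne
      have hlt : φ lastm < topn := lt_of_le_of_ne (htop _) hne
      have hnot : (lastm, topn) ∉ Tstar φ := by
        intro hc
        exact absurd hc.1 (not_le.mpr hlt)
      have hsub : Tstar φ ⊆ insert (lastm, topn) (Tstar φ) := Set.subset_insert _ _
      have hchain' : IsChain (· ≤ ·) (insert (lastm, topn) (Tstar φ)) := by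
        apply hchain.insert
        rintro ⟨p, i⟩ hpi _
        exact Or.inr ⟨hlast p, le_trans hpi.1 (le_trans (hφ (hlast p)) hlt.le)⟩
      have := hmax.2 hchain' hsub
      exact hnot (this ▸ Set.mem_insert _ _)
  exact ⟨A, A.trans B⟩
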